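/- arXiv:1506.02262 — 2 statements merged into one kernel-verified Lean document; each statement's English description precedes it below -/
import Mathlib

section
/- Let a₁, a₂, μ₁, μ₂, β > 0 and let (u_n, v_n) be a sequence in S_{a₁} × S_{a₂} such that J(u_n, v_n) → c for some c > 0 and G(u_n, v_n) → 0 as n → ∞. Then (u_n, v_n) is bounded in H¹(ℝ³, ℝ²), and there exists a constant C̄ > 0 such that ∫ (|∇u_n|² + |∇v_n|²) ≥ C̄ for all sufficiently large n. -/
open MeasureTheory Real Filter Topology

noncomputable section

abbrev E3 : Type := EuclideanSpace ℝ (Fin 3)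

def lap (u : E3 → ℝ) (x : E3) : ℝ :=
  ∑ i : Fin 3,
    fderiv ℝ (fun y => fderiv ℝ u y (EuclideanSpace.single i 1)) x (EuclideanSpace.single i 1)

def InH1 (u : E3 → ℝ) : Prop :=
  MemLp u 2 volume ∧ MemLp (fun x => gradient u x) 2 volume

def IsRadial (u : E3 → ℝ) : Prop := ∀ x y : E3, ‖x‖ = ‖y‖ → u x = u y

def sStar (s : ℝ) (w : E3 → ℝ) : E3 → ℝ := fun x => Real.exp (3 * s / 2) * w (Real.exp s • x)

def Ifun (μ : ℝ) (w : E3 → ℝ) : ℝ :=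
  ∫ x, ((1 / 2) * ‖gradient w x‖ ^ 2 - (μ / 4) * w x ^ 4)

def J2 (μ₁ μ₂ β : ℝ) (u v : E3 → ℝ) : ℝ :=
  (∫ x, ((1 / 2) * ‖gradient u x‖ ^ 2 - (μ₁ / 4) * u x ^ 4))
    + (∫ x, ((1 / 2) * ‖gradient v x‖ ^ 2 - (μ₂ / 4) * v x ^ 4))
    - (β / 2) * ∫ x, u x ^ 2 * v x ^ 2

def G2 (μ₁ μ₂ β : ℝ) (u v : E3 → ℝ) : ℝ :=
  (∫ x, (‖gradient u x‖ ^ 2 + ‖gradient v x‖ ^ 2))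
    - (3 / 4) * ∫ x, (μ₁ * u x ^ 4 + 2 * β * u x ^ 2 * v x ^ 2 + μ₂ * v x ^ 4)

def IsW0 (w : E3 → ℝ) : Prop :=
  InH1 w ∧ IsRadial w ∧ (∀ x, 0 < w x) ∧ (∀ x, w x ≤ w 0) ∧
    (∀ x, -lap w x + w x = w x ^ 3)

def wStar (C₀ a μ : ℝ) (w0 : E3 → ℝ) : E3 → ℝ :=
  fun x => (C₀ / (μ ^ ((3:ℝ)/2) * a ^ 2)) * w0 ((C₀ / (μ * a ^ 2)) • x)

def ell (w0 : E3 → ℝ) (a μ : ℝ) : ℝ :=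
  (∫ x, w0 x ^ 2) * (∫ x, w0 x ^ 4) / (8 * μ ^ 2 * a ^ 2)

def InP (a μ : ℝ) (w : E3 → ℝ) : Prop :=
  InH1 w ∧ (∫ x, w x ^ 2) = a ^ 2 ∧
    (∫ x, ‖gradient w x‖ ^ 2) = (3 * μ / 4) * ∫ x, w x ^ 4

def H1sq (w : E3 → ℝ) : ℝ := ∫ x, (‖gradient w x‖ ^ 2 + w x ^ 2)

def distH1 (u v : E3 → ℝ) : ℝ :=
  Real.sqrt (∫ x, (‖gradient (fun y => u y - v y) x‖ ^ 2 + (u x - v x) ^ 2))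

def Jk {k : ℕ} (β : Fin k → Fin k → ℝ) (u : Fin k → E3 → ℝ) : ℝ :=
  ∫ x, ((1 / 2) * ∑ i, ‖gradient (u i) x‖ ^ 2
    - (1 / 4) * ∑ i, ∑ j, β i j * u i x ^ 2 * u j x ^ 2)

def Gk {k : ℕ} (β : Fin k → Fin k → ℝ) (u : Fin k → E3 → ℝ) : ℝ :=
  (∫ x, ∑ i, ‖gradient (u i) x‖ ^ 2)
    - (3 / 4) * ∫ x, ∑ i, ∑ j, β i j * u i x ^ 2 * u j x ^ 2

def Rk {k : ℕ} (β : Fin k → Fin k → ℝ) (u : Fin k → E3 → ℝ) : ℝ :=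
  8 * (∫ x, ∑ i, ‖gradient (u i) x‖ ^ 2) ^ 3
    / (27 * (∫ x, ∑ i, ∑ j, β i j * u i x ^ 2 * u j x ^ 2) ^ 2)

lemma grad_sq_int (w : E3 → ℝ) (hw : InH1 w) :
    Integrable (fun x => ‖gradient w x‖ ^ 2) volume :=
  (memLp_two_iff_integrable_sq_norm hw.2.aestronglyMeasurable).1 hw.2

lemma fn_sq_int (w : E3 → ℝ) (hw : InH1 w) :
    Integrable (fun x => w x ^ 2) volume :=
  (memLp_two_iff_integrable_sq hw.1.aestronglyMeasurable).1 hw.1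

/-- Single-function half term bound: `∫ (½‖∇w‖² − (μ/4) w⁴) ≤ ½ ∫‖∇w‖²`. -/
lemma half_term_le (μ : ℝ) (hμ : 0 < μ) (w : E3 → ℝ) (hw : InH1 w) :
    (∫ x, ((1 / 2) * ‖gradient w x‖ ^ 2 - (μ / 4) * w x ^ 4))
      ≤ (1 / 2) * ∫ x, ‖gradient w x‖ ^ 2 := by
  have hg := grad_sq_int w hw
  by_cases h4 : Integrable (fun x => w x ^ 4) volume
  · rw [integral_sub (hg.const_mul _) (h4.const_mul _), integral_const_mul, integral_const_mul]
    have : 0 ≤ ∫ x, w x ^ 4 := integral_nonneg fun x => by positivity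
    nlinarith
  · have : ¬ Integrable (fun x => (1 / 2) * ‖gradient w x‖ ^ 2 - (μ / 4) * w x ^ 4) volume := by
      intro hI
      have h1 : Integrable (fun x => (μ / 4) * w x ^ 4) volume := by
        have h2 := (hg.const_mul (1 / 2)).sub hI
        exact h2.congr (Filter.Eventually.of_forall fun x => by
          simp only [Pi.sub_apply]; ring)
      have : Integrable (fun x => w x ^ 4) volume := by
        have hunit : IsUnit (μ / 4) := (isUnit_iff_ne_zero).2 (by positivity)
        exact (integrable_const_mul_iff hunit _).1 h1
      exact h4 this
    rw [integral_undef this]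
    have : 0 ≤ ∫ x, ‖gradient w x‖ ^ 2 := integral_nonneg fun x => by positivity
    linarith

lemma dichotomy (μ₁ μ₂ β : ℝ) (hμ₁ : 0 < μ₁) (hμ₂ : 0 < μ₂) (hβ : 0 < β)
    (u v : E3 → ℝ) (hu : InH1 u) (hv : InH1 v) :
    (6 * J2 μ₁ μ₂ β u v - 2 * G2 μ₁ μ₂ β u v
        = (∫ x, ‖gradient u x‖ ^ 2) + ∫ x, ‖gradient v x‖ ^ 2) ∨
    (G2 μ₁ μ₂ β u v = (∫ x, ‖gradient u x‖ ^ 2) + ∫ x, ‖gradient v x‖ ^ 2 ∧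
      2 * J2 μ₁ μ₂ β u v ≤ G2 μ₁ μ₂ β u v) := by
  have hgu := grad_sq_int u hu
  have hgv := grad_sq_int v hv
  have hGsplit : (∫ x, (‖gradient u x‖ ^ 2 + ‖gradient v x‖ ^ 2))
      = (∫ x, ‖gradient u x‖ ^ 2) + ∫ x, ‖gradient v x‖ ^ 2 := integral_add hgu hgv
  by_cases h : Integrable
      (fun x => μ₁ * u x ^ 4 + 2 * β * u x ^ 2 * v x ^ 2 + μ₂ * v x ^ 4) volume
  · left
    have hmu : AEStronglyMeasurable u volume := hu.1.aestronglyMeasurable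
    have hmv : AEStronglyMeasurable v volume := hv.1.aestronglyMeasurable
    have hu4 : Integrable (fun x => u x ^ 4) volume := by
      have h1 : Integrable (fun x => μ₁ * u x ^ 4) volume := by
        refine h.mono' ((hmu.aemeasurable.pow_const 4).const_mul μ₁).aestronglyMeasurable
          (Filter.Eventually.of_forall fun x => ?_)
        have h2 : (0:ℝ) ≤ u x ^ 2 * v x ^ 2 := by positivity
        have h3 : (0:ℝ) ≤ v x ^ 4 := by positivity
        have h4 : (0:ℝ) ≤ μ₁ * u x ^ 4 := by positivity
        rw [Real.norm_eq_abs, abs_of_nonneg h4]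
        nlinarith
      exact (integrable_const_mul_iff ((isUnit_iff_ne_zero).2 hμ₁.ne') _).1 h1
    have hv4 : Integrable (fun x => v x ^ 4) volume := by
      have h1 : Integrable (fun x => μ₂ * v x ^ 4) volume := by
        refine h.mono' ((hmv.aemeasurable.pow_const 4).const_mul μ₂).aestronglyMeasurable
          (Filter.Eventually.of_forall fun x => ?_)
        have h2 : (0:ℝ) ≤ u x ^ 2 * v x ^ 2 := by positivity
        have h3 : (0:ℝ) ≤ u x ^ 4 := by positivity
        have h4 : (0:ℝ) ≤ μ₂ * v x ^ 4 := by positivity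
        rw [Real.norm_eq_abs, abs_of_nonneg h4]
        nlinarith
      exact (integrable_const_mul_iff ((isUnit_iff_ne_zero).2 hμ₂.ne') _).1 h1
    have huv : Integrable (fun x => u x ^ 2 * v x ^ 2) volume := by
      have h1 : Integrable (fun x => (2 * β) * (u x ^ 2 * v x ^ 2)) volume := by
        refine h.mono'
          ((((hmu.aemeasurable.pow_const 2).mul (hmv.aemeasurable.pow_const 2)).const_mul
            (2 * β)).aestronglyMeasurable)
          (Filter.Eventually.of_forall fun x => ?_)
        have h2 : (0:ℝ) ≤ u x ^ 4 := by positivity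
        have h3 : (0:ℝ) ≤ v x ^ 4 := by positivity
        have h4 : (0:ℝ) ≤ (2 * β) * (u x ^ 2 * v x ^ 2) := by positivity
        rw [Real.norm_eq_abs, abs_of_nonneg h4]
        nlinarith
      exact (integrable_const_mul_iff ((isUnit_iff_ne_zero).2 (by positivity : (2*β) ≠ 0)) _).1 h1
    have hJu : (∫ x, ((1 / 2) * ‖gradient u x‖ ^ 2 - (μ₁ / 4) * u x ^ 4))
        = (1/2) * (∫ x, ‖gradient u x‖ ^ 2) - (μ₁/4) * ∫ x, u x ^ 4 := by
      rw [integral_sub (hgu.const_mul _) (hu4.const_mul _), integral_const_mul,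
        integral_const_mul]
    have hJv : (∫ x, ((1 / 2) * ‖gradient v x‖ ^ 2 - (μ₂ / 4) * v x ^ 4))
        = (1/2) * (∫ x, ‖gradient v x‖ ^ 2) - (μ₂/4) * ∫ x, v x ^ 4 := by
      rw [integral_sub (hgv.const_mul _) (hv4.const_mul _), integral_const_mul,
        integral_const_mul]
    have hQ : (∫ x, (μ₁ * u x ^ 4 + 2 * β * u x ^ 2 * v x ^ 2 + μ₂ * v x ^ 4))
        = μ₁ * (∫ x, u x ^ 4) + 2 * β * (∫ x, u x ^ 2 * v x ^ 2) + μ₂ * ∫ x, v x ^ 4 := by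
      have huv2 : Integrable (fun x => 2 * β * u x ^ 2 * v x ^ 2) volume := by
        simpa [mul_assoc] using huv.const_mul (2 * β)
      have h12 : Integrable (fun x => μ₁ * u x ^ 4 + 2 * β * u x ^ 2 * v x ^ 2) volume :=
        (hu4.const_mul μ₁).add huv2
      rw [integral_add h12 (hv4.const_mul μ₂),
        integral_add (hu4.const_mul μ₁) huv2, integral_const_mul, integral_const_mul]
      have : (∫ x, 2 * β * u x ^ 2 * v x ^ 2) = 2 * β * ∫ x, u x ^ 2 * v x ^ 2 := by
        simp_rw [mul_assoc]
        rw [integral_const_mul, integral_const_mul]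
      rw [this]
    rw [J2, G2, hJu, hJv, hQ, hGsplit]
    ring
  · right
    have hQ0 : (∫ x, (μ₁ * u x ^ 4 + 2 * β * u x ^ 2 * v x ^ 2 + μ₂ * v x ^ 4)) = 0 :=
      integral_undef h
    constructor
    · rw [G2, hQ0, hGsplit]; ring
    · have h1 := half_term_le μ₁ hμ₁ u hu
      have h2 := half_term_le μ₂ hμ₂ v hv
      have h3 : 0 ≤ ∫ x, u x ^ 2 * v x ^ 2 := integral_nonneg fun x => by positivity
      rw [J2, G2, hQ0, hGsplit]
      nlinarith

/-- A Palais–Smale-type sequence in `S_{a₁} × S_{a₂}` with `J → c > 0` and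
`G → 0` is bounded in `H¹(ℝ³,ℝ²)` and its gradients are bounded away from zero for large `n`. -/
theorem PS_sequence_bounds (a₁ a₂ μ₁ μ₂ β c : ℝ)
    (ha₁ : 0 < a₁) (ha₂ : 0 < a₂) (hμ₁ : 0 < μ₁) (hμ₂ : 0 < μ₂) (hβ : 0 < β) (hc : 0 < c)
    (u v : ℕ → E3 → ℝ)
    (hmem : ∀ n, InH1 (u n) ∧ IsRadial (u n) ∧ (∫ x, u n x ^ 2) = a₁ ^ 2 ∧
      InH1 (v n) ∧ IsRadial (v n) ∧ (∫ x, v n x ^ 2) = a₂ ^ 2)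
    (hJ : Tendsto (fun n => J2 μ₁ μ₂ β (u n) (v n)) atTop (𝓝 c))
    (hG : Tendsto (fun n => G2 μ₁ μ₂ β (u n) (v n)) atTop (𝓝 0)) :
    (∃ M : ℝ, ∀ n, H1sq (u n) + H1sq (v n) ≤ M) ∧
    ∃ Cb : ℝ, 0 < Cb ∧ ∃ N : ℕ, ∀ n ≥ N,
      Cb ≤ ∫ x, (‖gradient (u n) x‖ ^ 2 + ‖gradient (v n) x‖ ^ 2) := by
  set A : ℕ → ℝ := fun n => (∫ x, ‖gradient (u n) x‖ ^ 2) + ∫ x, ‖gradient (v n) x‖ ^ 2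
    with hA
  obtain ⟨N₁, hN₁⟩ := (Metric.tendsto_atTop.1 hJ) (c / 4) (by positivity)
  obtain ⟨N₂, hN₂⟩ := (Metric.tendsto_atTop.1 hG) (c / 2) (by positivity)
  set N := max N₁ N₂ with hN
  have key : ∀ n ≥ N, 3 * c ≤ A n ∧ A n ≤ 9 * c := by
    intro n hn
    have hJn := abs_lt.1 (by
      have := hN₁ n (le_trans (le_max_left _ _) hn)
      rwa [Real.dist_eq] at this : |J2 μ₁ μ₂ β (u n) (v n) - c| < c / 4)
    have hGn := abs_lt.1 (by
      have := hN₂ n (le_trans (le_max_right _ _) hn)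
      rwa [Real.dist_eq, sub_zero] at this : |G2 μ₁ μ₂ β (u n) (v n)| < c / 2)
    rcases dichotomy μ₁ μ₂ β hμ₁ hμ₂ hβ (u n) (v n) (hmem n).1 (hmem n).2.2.2.1 with
      h | ⟨h1, h2⟩
    · have hAn : A n = (∫ x, ‖gradient (u n) x‖ ^ 2) + ∫ x, ‖gradient (v n) x‖ ^ 2 := rfl
      constructor
      · rw [hAn]; linarith
      · rw [hAn]; linarith
    · exfalso; linarith
  have hH : ∀ n, H1sq (u n) + H1sq (v n) = A n + a₁ ^ 2 + a₂ ^ 2 := by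
    intro n
    have h1 : H1sq (u n) = (∫ x, ‖gradient (u n) x‖ ^ 2) + a₁ ^ 2 := by
      rw [H1sq, integral_add (grad_sq_int _ (hmem n).1) (fn_sq_int _ (hmem n).1),
        (hmem n).2.2.1]
    have h2 : H1sq (v n) = (∫ x, ‖gradient (v n) x‖ ^ 2) + a₂ ^ 2 := by
      rw [H1sq, integral_add (grad_sq_int _ (hmem n).2.2.2.1) (fn_sq_int _ (hmem n).2.2.2.1),
        (hmem n).2.2.2.2.2]
    have hAn : A n = (∫ x, ‖gradient (u n) x‖ ^ 2) + ∫ x, ‖gradient (v n) x‖ ^ 2 := rfl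
    rw [h1, h2, hAn]; ring
  constructor
  · refine ⟨max (9 * c + a₁ ^ 2 + a₂ ^ 2)
      ((Finset.range (N + 1)).sup' (by simp) (fun n => H1sq (u n) + H1sq (v n))), fun n => ?_⟩
    rcases le_or_gt n N with h | h
    · exact le_trans
        (Finset.le_sup' (fun n => H1sq (u n) + H1sq (v n))
          (by simp [Nat.lt_succ_iff, h] : n ∈ Finset.range (N + 1)))
        (le_max_right _ _)
    · have h9 := (key n h.le).2
      have := hH n
      have : H1sq (u n) + H1sq (v n) ≤ 9 * c + a₁ ^ 2 + a₂ ^ 2 := by linarith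
      exact le_trans this (le_max_left _ _)
  · refine ⟨3 * c, by positivity, N, fun n hn => ?_⟩
    have h3 := (key n hn).1
    have hsplit : (∫ x, (‖gradient (u n) x‖ ^ 2 + ‖gradient (v n) x‖ ^ 2)) = A n := by
      exact integral_add (grad_sq_int _ (hmem n).1) (grad_sq_int _ (hmem n).2.2.2.1)
    rw [hsplit]; exact h3
end
end

section
/- Let a₁, a₂, μ₁, μ₂ > 0. There exists β₂ > 0, depending on a₁, a₂, μ₁, μ₂, such that for every β > β₂ one has sup_{s ∈ ℝ} J(s ⋆ w_{a₁,μ₁}, s ⋆ w_{a₂,μ₂}) < min{ℓ(a₁,μ₁), ℓ(a₂,μ₂)}. -/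
open MeasureTheory Real Filter Topology

noncomputable section

theorem aux13_grad_scale (w : E3 → ℝ) (B b : ℝ) (hB : B ≠ 0) (hb : b ≠ 0) (x : E3) :
    gradient (fun y => B * w (b • y)) x = (B * b) • gradient w (b • x) := by
  by_cases h : DifferentiableAt ℝ w (b • x)
  · have h1 : HasFDerivAt (fun y : E3 => b • y) (b • ContinuousLinearMap.id ℝ E3) x :=
      (hasFDerivAt_id x).const_smul b
    have h2 : HasFDerivAt (fun y : E3 => w (b • y))
        ((fderiv ℝ w (b • x)).comp (b • ContinuousLinearMap.id ℝ E3)) x :=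
      (h.hasFDerivAt).comp x h1
    have h3 := h2.const_mul B
    have hc : (B • ((fderiv ℝ w (b • x)).comp (b • ContinuousLinearMap.id ℝ E3)))
        = (B * b) • fderiv ℝ w (b • x) := by
      ext y
      simp [mul_smul, mul_comm]
    rw [gradient, h3.fderiv, hc, gradient, LinearIsometryEquiv.map_smul]
  · have h' : ¬ DifferentiableAt ℝ (fun y => B * w (b • y)) x := by
      intro hg
      apply h
      have hg' : DifferentiableAt ℝ (fun y => B * w (b • y)) (b⁻¹ • (b • x)) := by
        rwa [inv_smul_smul₀ hb]
      have hd : DifferentiableAt ℝ (fun z : E3 => b⁻¹ • z) (b • x) :=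
        (differentiable_id.const_smul b⁻¹).differentiableAt
      have h5 : DifferentiableAt ℝ (fun z : E3 => B⁻¹ * (B * w (b • (b⁻¹ • z)))) (b • x) :=
        ((hg'.comp (b • x) hd)).const_mul B⁻¹
      have he : (fun z : E3 => B⁻¹ * (B * w (b • (b⁻¹ • z)))) = w := by
        funext z
        rw [smul_inv_smul₀ hb, ← mul_assoc, inv_mul_cancel₀ hB, one_mul]
      rwa [he] at h5
    rw [gradient, gradient, fderiv_zero_of_not_differentiableAt h,
      fderiv_zero_of_not_differentiableAt h']
    simp

theorem aux13_comp_smul_int (F : E3 → ℝ) {b : ℝ} (hb : 0 < b) :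
    (∫ x, F (b • x)) = b⁻¹ ^ 3 * ∫ x, F x := by
  rw [MeasureTheory.Measure.integral_comp_smul volume F b]
  rw [show Module.finrank ℝ E3 = 3 from finrank_euclideanSpace_fin, smul_eq_mul,
    abs_of_pos (by positivity), inv_pow]

theorem aux13_kin_eq (w : E3 → ℝ) (B b : ℝ) (hB : B ≠ 0) (hb : 0 < b) :
    (∫ x, ‖gradient (fun y => B * w (b • y)) x‖ ^ 2)
      = B ^ 2 / b * ∫ x, ‖gradient w x‖ ^ 2 := by
  have hp : ∀ x : E3, ‖gradient (fun y => B * w (b • y)) x‖ ^ 2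
      = (B * b) ^ 2 * ‖gradient w (b • x)‖ ^ 2 := by
    intro x
    rw [aux13_grad_scale w B b hB hb.ne' x, norm_smul, mul_pow, Real.norm_eq_abs, sq_abs]
  rw [show (∫ x, ‖gradient (fun y => B * w (b • y)) x‖ ^ 2)
      = ∫ x, (B * b) ^ 2 * ‖gradient w (b • x)‖ ^ 2 from by simp_rw [hp]]
  rw [MeasureTheory.integral_const_mul]
  have h3 : (∫ x, ‖gradient w (b • x)‖ ^ 2) = b⁻¹ ^ 3 * ∫ x, ‖gradient w x‖ ^ 2 :=
    aux13_comp_smul_int (fun z => ‖gradient w z‖ ^ 2) hb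
  rw [h3]
  field_simp

theorem aux13_kin_int (w : E3 → ℝ) (B b : ℝ) (hB : B ≠ 0) (hb : 0 < b)
    (hint : Integrable (fun x => ‖gradient w x‖ ^ 2)) :
    Integrable (fun x => ‖gradient (fun y => B * w (b • y)) x‖ ^ 2) := by
  have h1 : Integrable (fun x : E3 => ‖gradient w (b • x)‖ ^ 2) := hint.comp_smul hb.ne'
  have hp : ∀ x : E3, ‖gradient (fun y => B * w (b • y)) x‖ ^ 2
      = (B * b) ^ 2 * ‖gradient w (b • x)‖ ^ 2 := by
    intro x
    rw [aux13_grad_scale w B b hB hb.ne' x, norm_smul, mul_pow, Real.norm_eq_abs, sq_abs]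
  exact (h1.const_mul ((B * b) ^ 2)).congr (Filter.Eventually.of_forall fun x => (hp x).symm)

theorem aux13_pow4_eq (w : E3 → ℝ) (B b : ℝ) (hb : 0 < b) :
    (∫ x, (B * w (b • x)) ^ 4) = B ^ 4 / b ^ 3 * ∫ x, w x ^ 4 := by
  rw [show (∫ x, (B * w (b • x)) ^ 4) = ∫ x, B ^ 4 * w (b • x) ^ 4 from by simp_rw [mul_pow]]
  rw [MeasureTheory.integral_const_mul]
  have h3 : (∫ x, w (b • x) ^ 4) = b⁻¹ ^ 3 * ∫ x, w x ^ 4 :=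
    aux13_comp_smul_int (fun z => w z ^ 4) hb
  rw [h3]
  field_simp

theorem aux13_pow4_int (w : E3 → ℝ) (B b : ℝ) (hb : 0 < b)
    (hint : Integrable (fun x => w x ^ 4)) :
    Integrable (fun x => (B * w (b • x)) ^ 4) := by
  have h1 : Integrable (fun x : E3 => w (b • x) ^ 4) := hint.comp_smul hb.ne'
  exact (h1.const_mul (B ^ 4)).congr (Filter.Eventually.of_forall fun x => by ring)

theorem aux13_cross_eq (w₁ w₂ : E3 → ℝ) (B b : ℝ) (hb : 0 < b) :
    (∫ x, (B * w₁ (b • x)) ^ 2 * (B * w₂ (b • x)) ^ 2)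
      = B ^ 4 / b ^ 3 * ∫ x, w₁ x ^ 2 * w₂ x ^ 2 := by
  rw [show (∫ x, (B * w₁ (b • x)) ^ 2 * (B * w₂ (b • x)) ^ 2)
      = ∫ x, B ^ 4 * (w₁ (b • x) ^ 2 * w₂ (b • x) ^ 2) from by congr 1; funext x; ring]
  rw [MeasureTheory.integral_const_mul]
  have h3 : (∫ x, w₁ (b • x) ^ 2 * w₂ (b • x) ^ 2) = b⁻¹ ^ 3 * ∫ x, w₁ x ^ 2 * w₂ x ^ 2 :=
    aux13_comp_smul_int (fun z => w₁ z ^ 2 * w₂ z ^ 2) hb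
  rw [h3]
  field_simp

theorem aux13_amgm (K L t : ℝ) (hK : 0 ≤ K) (hL : 0 < L) (ht : 0 < t) :
    K * t ^ 2 - L * t ^ 3 ≤ 4 * K ^ 3 / (27 * L ^ 2) := by
  rw [le_div_iff₀ (by positivity)]
  nlinarith [mul_nonneg (sq_nonneg (3 * L * t - 2 * K))
    (by positivity : (0:ℝ) ≤ 3 * L * t + K)]

theorem aux13_main (μ₁ μ₂ : ℝ) (hμ₁ : 0 ≤ μ₁) (hμ₂ : 0 ≤ μ₂) (W₁ W₂ : E3 → ℝ) (m : ℝ)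
    (hm : 0 < m)
    (hIK₁ : Integrable (fun x => ‖gradient W₁ x‖ ^ 2))
    (hIK₂ : Integrable (fun x => ‖gradient W₂ x‖ ^ 2))
    (hIP₁ : Integrable (fun x => W₁ x ^ 4))
    (hIP₂ : Integrable (fun x => W₂ x ^ 4))
    (hD : 0 < ∫ x, W₁ x ^ 2 * W₂ x ^ 2) :
    ∃ β₂ : ℝ, 0 < β₂ ∧ ∀ β : ℝ, β₂ < β →
      sSup {c : ℝ | ∃ s : ℝ, c = J2 μ₁ μ₂ β (sStar s W₁) (sStar s W₂)} < m := by
  obtain ⟨K, hKdef⟩ : ∃ r : ℝ, r = (1:ℝ)/2 * ((∫ x, ‖gradient W₁ x‖ ^ 2)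
    + ∫ x, ‖gradient W₂ x‖ ^ 2) := ⟨_, rfl⟩
  obtain ⟨D, hDdef⟩ : ∃ r : ℝ, r = ∫ x, W₁ x ^ 2 * W₂ x ^ 2 := ⟨_, rfl⟩
  obtain ⟨Q, hQdef⟩ : ∃ r : ℝ, r = μ₁/4 * (∫ x, W₁ x ^ 4) + μ₂/4 * (∫ x, W₂ x ^ 4) := ⟨_, rfl⟩
  have hK : 0 ≤ K := by
    rw [hKdef]
    have h1 : 0 ≤ ∫ x, ‖gradient W₁ x‖ ^ 2 := integral_nonneg fun x => by positivity
    have h2 : 0 ≤ ∫ x, ‖gradient W₂ x‖ ^ 2 := integral_nonneg fun x => by positivity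
    linarith
  have hDpos : 0 < D := hDdef ▸ hD
  have hQ : 0 ≤ Q := by
    rw [hQdef]
    have h1 : 0 ≤ ∫ x, W₁ x ^ 4 := integral_nonneg fun x => by positivity
    have h2 : 0 ≤ ∫ x, W₂ x ^ 4 := integral_nonneg fun x => by positivity
    nlinarith
  refine ⟨1 + Real.sqrt (16 * K ^ 3 / (27 * D ^ 2 * m)), by positivity, fun β hβ => ?_⟩
  have hβpos : 0 < β := lt_trans (by positivity) hβ
  obtain ⟨L, hLdef⟩ : ∃ r : ℝ, r = Q + β/2 * D := ⟨_, rfl⟩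
  have hLD : β/2 * D ≤ L := by rw [hLdef]; linarith
  have hL : 0 < L := lt_of_lt_of_le (by positivity) hLD
  -- key computation
  have key : ∀ s : ℝ, J2 μ₁ μ₂ β (sStar s W₁) (sStar s W₂)
      = Real.exp (2*s) * K - Real.exp (3*s) * L := by
    intro s
    have hes := Real.exp_ne_zero s
    have e1 : Real.exp (3 * s / 2) ^ 2 / Real.exp s = Real.exp (2*s) := by
      rw [div_eq_iff hes, ← Real.exp_nat_mul, ← Real.exp_add, Real.exp_eq_exp]
      push_cast; ring
    have e2 : Real.exp (3 * s / 2) ^ 4 / Real.exp s ^ 3 = Real.exp (3*s) := by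
      rw [div_eq_iff (pow_ne_zero _ hes), ← Real.exp_nat_mul, ← Real.exp_nat_mul,
        ← Real.exp_add, Real.exp_eq_exp]
      push_cast; ring
    have k1 : (∫ x, ‖gradient (sStar s W₁) x‖ ^ 2)
        = Real.exp (3 * s / 2) ^ 2 / Real.exp s * ∫ x, ‖gradient W₁ x‖ ^ 2 :=
      aux13_kin_eq W₁ _ _ (Real.exp_ne_zero _) (Real.exp_pos s)
    have k2 : (∫ x, ‖gradient (sStar s W₂) x‖ ^ 2)
        = Real.exp (3 * s / 2) ^ 2 / Real.exp s * ∫ x, ‖gradient W₂ x‖ ^ 2 :=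
      aux13_kin_eq W₂ _ _ (Real.exp_ne_zero _) (Real.exp_pos s)
    have p1 : (∫ x, (sStar s W₁) x ^ 4)
        = Real.exp (3 * s / 2) ^ 4 / Real.exp s ^ 3 * ∫ x, W₁ x ^ 4 :=
      aux13_pow4_eq W₁ _ _ (Real.exp_pos s)
    have p2 : (∫ x, (sStar s W₂) x ^ 4)
        = Real.exp (3 * s / 2) ^ 4 / Real.exp s ^ 3 * ∫ x, W₂ x ^ 4 :=
      aux13_pow4_eq W₂ _ _ (Real.exp_pos s)
    have x1 : (∫ x, (sStar s W₁) x ^ 2 * (sStar s W₂) x ^ 2)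
        = Real.exp (3 * s / 2) ^ 4 / Real.exp s ^ 3 * ∫ x, W₁ x ^ 2 * W₂ x ^ 2 :=
      aux13_cross_eq W₁ W₂ _ _ (Real.exp_pos s)
    have i1 : Integrable (fun x => ‖gradient (sStar s W₁) x‖ ^ 2) :=
      aux13_kin_int W₁ _ _ (Real.exp_ne_zero _) (Real.exp_pos s) hIK₁
    have i2 : Integrable (fun x => ‖gradient (sStar s W₂) x‖ ^ 2) :=
      aux13_kin_int W₂ _ _ (Real.exp_ne_zero _) (Real.exp_pos s) hIK₂
    have j1 : Integrable (fun x => (sStar s W₁) x ^ 4) :=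
      aux13_pow4_int W₁ _ _ (Real.exp_pos s) hIP₁
    have j2 : Integrable (fun x => (sStar s W₂) x ^ 4) :=
      aux13_pow4_int W₂ _ _ (Real.exp_pos s) hIP₂
    have T1 : (∫ x, ((1:ℝ)/2 * ‖gradient (sStar s W₁) x‖ ^ 2 - μ₁/4 * (sStar s W₁) x ^ 4))
        = (1:ℝ)/2 * (∫ x, ‖gradient (sStar s W₁) x‖ ^ 2) - μ₁/4 * ∫ x, (sStar s W₁) x ^ 4 := by
      rw [MeasureTheory.integral_sub (i1.const_mul _) (j1.const_mul _),
        MeasureTheory.integral_const_mul, MeasureTheory.integral_const_mul]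
    have T2 : (∫ x, ((1:ℝ)/2 * ‖gradient (sStar s W₂) x‖ ^ 2 - μ₂/4 * (sStar s W₂) x ^ 4))
        = (1:ℝ)/2 * (∫ x, ‖gradient (sStar s W₂) x‖ ^ 2) - μ₂/4 * ∫ x, (sStar s W₂) x ^ 4 := by
      rw [MeasureTheory.integral_sub (i2.const_mul _) (j2.const_mul _),
        MeasureTheory.integral_const_mul, MeasureTheory.integral_const_mul]
    rw [J2, T1, T2, k1, k2, p1, p2, x1, e1, e2, hLdef, hQdef, hKdef, hDdef]
    ring
  have bound : ∀ c ∈ {c : ℝ | ∃ s : ℝ, c = J2 μ₁ μ₂ β (sStar s W₁) (sStar s W₂)},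
      c ≤ 4 * K ^ 3 / (27 * L ^ 2) := by
    rintro c ⟨s, rfl⟩
    rw [key s, show Real.exp (2*s) = Real.exp s ^ 2 from by
        rw [two_mul, Real.exp_add]; ring,
      show Real.exp (3*s) = Real.exp s ^ 3 from by
        rw [show (3:ℝ)*s = s + s + s from by ring, Real.exp_add, Real.exp_add]; ring]
    have := aux13_amgm K L (Real.exp s) hK hL (Real.exp_pos s)
    linarith
  refine lt_of_le_of_lt (Real.sSup_le bound (by positivity)) ?_
  -- final arithmetic
  have hsq : Real.sqrt (16 * K ^ 3 / (27 * D ^ 2 * m)) < β := by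
    have := Real.sqrt_nonneg (16 * K ^ 3 / (27 * D ^ 2 * m))
    linarith
  have hX : 16 * K ^ 3 / (27 * D ^ 2 * m) < β ^ 2 := by
    have h0 : 0 ≤ 16 * K ^ 3 / (27 * D ^ 2 * m) := by positivity
    calc 16 * K ^ 3 / (27 * D ^ 2 * m)
        = Real.sqrt (16 * K ^ 3 / (27 * D ^ 2 * m)) ^ 2 := (Real.sq_sqrt h0).symm
      _ < β ^ 2 := by
          exact pow_lt_pow_left₀ hsq (Real.sqrt_nonneg _) (by norm_num)
  have h16 : 16 * K ^ 3 < β ^ 2 * (27 * D ^ 2 * m) := by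
    have := (div_lt_iff₀ (by positivity : (0:ℝ) < 27 * D ^ 2 * m)).1 hX
    linarith
  rw [div_lt_iff₀ (by positivity : (0:ℝ) < 27 * L ^ 2)]
  nlinarith [hLD, hL, hDpos, hβpos, hm, pow_le_pow_left₀ (by positivity : (0:ℝ) ≤ β/2*D) hLD 2]

theorem aux13_cross_pos (w : E3 → ℝ) (hpos : ∀ x, 0 < w x) (hbd : ∀ x, w x ≤ w 0)
    (hInt2 : Integrable (fun x => w x ^ 2))
    (B₁ b₁ B₂ b₂ : ℝ) (hB₁ : 0 < B₁) (hb₁ : 0 < b₁) (hB₂ : 0 < B₂) (hb₂ : 0 < b₂) :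
    0 < ∫ x, (B₁ * w (b₁ • x)) ^ 2 * (B₂ * w (b₂ • x)) ^ 2 := by
  have hg₁ : Integrable (fun x : E3 => w (b₁ • x) ^ 2) := hInt2.comp_smul hb₁.ne'
  have hg₂ : Integrable (fun x : E3 => w (b₂ • x) ^ 2) := hInt2.comp_smul hb₂.ne'
  have hint : Integrable (fun x => (B₁ * w (b₁ • x)) ^ 2 * (B₂ * w (b₂ • x)) ^ 2) := by
    refine Integrable.mono' (hg₁.const_mul (B₁ ^ 2 * B₂ ^ 2 * w 0 ^ 2)) ?_
      (Filter.Eventually.of_forall fun x => ?_)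
    · exact ((hg₁.aestronglyMeasurable.mul hg₂.aestronglyMeasurable).const_mul
        (B₁ ^ 2 * B₂ ^ 2)).congr (Filter.Eventually.of_forall fun x => by simp only [Pi.mul_apply]; ring)
    · rw [Real.norm_eq_abs, abs_of_nonneg (by positivity)]
      have h2 : w (b₂ • x) ^ 2 ≤ w 0 ^ 2 := pow_le_pow_left₀ (hpos _).le (hbd _) 2
      nlinarith [mul_le_mul_of_nonneg_left h2
        (by positivity : (0:ℝ) ≤ B₁ ^ 2 * B₂ ^ 2 * w (b₁ • x) ^ 2)]
  rw [integral_pos_iff_support_of_nonneg (fun x => by positivity) hint]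
  rw [show Function.support (fun x : E3 => (B₁ * w (b₁ • x)) ^ 2 * (B₂ * w (b₂ • x)) ^ 2)
      = Set.univ from Set.eq_univ_of_forall fun x =>
        mul_ne_zero (pow_ne_zero _ (mul_pos hB₁ (hpos _)).ne')
          (pow_ne_zero _ (mul_pos hB₂ (hpos _)).ne')]
  exact lt_of_lt_of_le (Metric.measure_ball_pos volume (0 : E3) one_pos)
    (measure_mono (Set.subset_univ _))

theorem aux13_int_pos (w : E3 → ℝ) (hpos : ∀ x, 0 < w x) (n : ℕ) (hn : n ≠ 0)
    (hint : Integrable (fun x => w x ^ n)) : 0 < ∫ x, w x ^ n := by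
  rw [integral_pos_iff_support_of_nonneg (fun x => (pow_pos (hpos x) n).le) hint]
  rw [show Function.support (fun x : E3 => w x ^ n) = Set.univ from
    Set.eq_univ_of_forall fun x => pow_ne_zero _ (hpos x).ne']
  exact lt_of_lt_of_le (Metric.measure_ball_pos volume (0 : E3) one_pos)
    (measure_mono (Set.subset_univ _))

/-- For `β` larger than some `β₂ > 0`, the supremum over `s ∈ ℝ` of
`J(s ⋆ w_{a₁,μ₁}, s ⋆ w_{a₂,μ₂})` is strictly smaller than `min{ℓ(a₁,μ₁), ℓ(a₂,μ₂)}`. -/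
theorem sup_along_dilations_below_min (a₁ a₂ μ₁ μ₂ : ℝ)
    (ha₁ : 0 < a₁) (ha₂ : 0 < a₂) (hμ₁ : 0 < μ₁) (hμ₂ : 0 < μ₂)
    (w0 : E3 → ℝ) (hw0 : IsW0 w0) :
    ∃ β₂ : ℝ, 0 < β₂ ∧ ∀ β : ℝ, β₂ < β →
      sSup {c : ℝ | ∃ s : ℝ,
          c = J2 μ₁ μ₂ β (sStar s (wStar (∫ x, w0 x ^ 2) a₁ μ₁ w0))
            (sStar s (wStar (∫ x, w0 x ^ 2) a₂ μ₂ w0))} <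
        min (ell w0 a₁ μ₁) (ell w0 a₂ μ₂) := by
  
  obtain ⟨⟨hw2, hwg⟩, hrad, hpos, hbd, heq⟩ := hw0
  have hInt2 : Integrable (fun x => w0 x ^ 2) := hw2.integrable_sq
  have hIntG : Integrable (fun x => ‖gradient w0 x‖ ^ 2) :=
    (memLp_two_iff_integrable_sq_norm hwg.aestronglyMeasurable).1 hwg
  have hInt4 : Integrable (fun x => w0 x ^ 4) := by
    refine (hInt2.const_mul ((w0 0) ^ 2)).mono'
      ((hInt2.aestronglyMeasurable.mul hInt2.aestronglyMeasurable).congr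
        (Filter.Eventually.of_forall fun x => by simp only [Pi.mul_apply]; ring))
      (Filter.Eventually.of_forall fun x => ?_)
    have h1 := hpos x
    have h2 := hbd x
    rw [Real.norm_eq_abs, abs_of_nonneg (by positivity)]
    nlinarith [mul_le_mul_of_nonneg_left (pow_le_pow_left₀ h1.le h2 2) (sq_nonneg (w0 x))]
  have hC0 : 0 < ∫ x, w0 x ^ 2 := aux13_int_pos w0 hpos 2 (by norm_num) hInt2
  have hC1 : 0 < ∫ x, w0 x ^ 4 := aux13_int_pos w0 hpos 4 (by norm_num) hInt4
  have hm : 0 < min (ell w0 a₁ μ₁) (ell w0 a₂ μ₂) := by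
    refine lt_min ?_ ?_ <;>
      exact div_pos (mul_pos hC0 hC1) (by positivity)
  have hb₁ : 0 < (∫ x, w0 x ^ 2) / (μ₁ * a₁ ^ 2) := div_pos hC0 (by positivity)
  have hb₂ : 0 < (∫ x, w0 x ^ 2) / (μ₂ * a₂ ^ 2) := div_pos hC0 (by positivity)
  have hB₁ : 0 < (∫ x, w0 x ^ 2) / (μ₁ ^ ((3:ℝ)/2) * a₁ ^ 2) :=
    div_pos hC0 (mul_pos (Real.rpow_pos_of_pos hμ₁ _) (pow_pos ha₁ 2))
  have hB₂ : 0 < (∫ x, w0 x ^ 2) / (μ₂ ^ ((3:ℝ)/2) * a₂ ^ 2) :=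
    div_pos hC0 (mul_pos (Real.rpow_pos_of_pos hμ₂ _) (pow_pos ha₂ 2))
  have hIK₁ : Integrable (fun x => ‖gradient (wStar (∫ x, w0 x ^ 2) a₁ μ₁ w0) x‖ ^ 2) :=
    aux13_kin_int w0 ((∫ x, w0 x ^ 2) / (μ₁ ^ ((3:ℝ)/2) * a₁ ^ 2))
      ((∫ x, w0 x ^ 2) / (μ₁ * a₁ ^ 2)) hB₁.ne' hb₁ hIntG
  have hIK₂ : Integrable (fun x => ‖gradient (wStar (∫ x, w0 x ^ 2) a₂ μ₂ w0) x‖ ^ 2) :=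
    aux13_kin_int w0 ((∫ x, w0 x ^ 2) / (μ₂ ^ ((3:ℝ)/2) * a₂ ^ 2))
      ((∫ x, w0 x ^ 2) / (μ₂ * a₂ ^ 2)) hB₂.ne' hb₂ hIntG
  have hIP₁ : Integrable (fun x => (wStar (∫ x, w0 x ^ 2) a₁ μ₁ w0) x ^ 4) :=
    aux13_pow4_int w0 ((∫ x, w0 x ^ 2) / (μ₁ ^ ((3:ℝ)/2) * a₁ ^ 2))
      ((∫ x, w0 x ^ 2) / (μ₁ * a₁ ^ 2)) hb₁ hInt4
  have hIP₂ : Integrable (fun x => (wStar (∫ x, w0 x ^ 2) a₂ μ₂ w0) x ^ 4) :=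
    aux13_pow4_int w0 ((∫ x, w0 x ^ 2) / (μ₂ ^ ((3:ℝ)/2) * a₂ ^ 2))
      ((∫ x, w0 x ^ 2) / (μ₂ * a₂ ^ 2)) hb₂ hInt4
  have hD : 0 < ∫ x, (wStar (∫ x, w0 x ^ 2) a₁ μ₁ w0) x ^ 2
      * (wStar (∫ x, w0 x ^ 2) a₂ μ₂ w0) x ^ 2 :=
    aux13_cross_pos w0 hpos hbd hInt2
      ((∫ x, w0 x ^ 2) / (μ₁ ^ ((3:ℝ)/2) * a₁ ^ 2)) ((∫ x, w0 x ^ 2) / (μ₁ * a₁ ^ 2))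
      ((∫ x, w0 x ^ 2) / (μ₂ ^ ((3:ℝ)/2) * a₂ ^ 2)) ((∫ x, w0 x ^ 2) / (μ₂ * a₂ ^ 2))
      hB₁ hb₁ hB₂ hb₂
  exact aux13_main μ₁ μ₂ hμ₁.le hμ₂.le (wStar (∫ x, w0 x ^ 2) a₁ μ₁ w0)
    (wStar (∫ x, w0 x ^ 2) a₂ μ₂ w0) (min (ell w0 a₁ μ₁) (ell w0 a₂ μ₂)) hm
    hIK₁ hIK₂ hIP₁ hIP₂ hD
end
end
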